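/- The edge labeling χ of the partition lattice Π_n defined by χ(x ⋖ y) = max(B₁ ∪ B₂), where y is obtained from x by merging the two parts B₁ and B₂, is an EL-labeling: every interval of Π_n has a unique maximal chain with strictly increasing label word, and this chain lexicographically precedes all other maximal chains in the interval. -/

import Mathlib

/-- the word of edge labels along a list, for an edge labeling `f` -/
def labelWord {A B : Type*} (f : A -> A -> B) : List A -> List B
  | a :: b :: l => f a b :: labelWord f (b :: l)
  | _ => []

/-- `L` is a saturated (covering) chain from `x` to `y`; these are exactly the
maximal chains of the interval `[x,y]`. -/
def CoverChain {A : Type*} [PartialOrder A] (x y : A) (L : List A) : Prop :=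
  L.head? = some x ∧ L.getLast? = some y ∧ L.Chain' (fun a b => a ⋖ b)

/-- The Wachs labeling of the partition lattice: the label of a cover `x ⋖ y`,
where `y` is obtained from `x` by merging parts `B₁` and `B₂`, is
`max (B₁ ∪ B₂)` (1-based). -/
def chi {n : ℕ} (x y : Finpartition (Finset.univ : Finset (Fin n))) : ℕ :=
  (y.parts \ x.parts).sup fun B => B.sup fun a => (a : ℕ) + 1

open Finset

section CC

variable {A : Type*} [PartialOrder A]

lemma coverChain_single (x : A) : CoverChain x x [x] := by
  refine ⟨rfl, rfl, List.isChain_singleton x⟩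

lemma coverChain_le : ∀ (L : List A) (x y : A), CoverChain x y L → x ≤ y
  | [], x, y, h => by simp [CoverChain] at h
  | [a], x, y, ⟨h1, h2, _⟩ => by
      simp only [List.head?_cons, Option.some.injEq, List.getLast?_singleton] at h1 h2
      subst h1; subst h2; rfl
  | a :: b :: t, x, y, ⟨h1, h2, h3⟩ => by
      simp only [List.head?_cons, Option.some.injEq] at h1
      subst h1
      rw [List.getLast?_cons_cons] at h2
      rw [List.Chain', List.isChain_cons_cons] at h3
      exact h3.1.le.trans (coverChain_le (b :: t) b y ⟨rfl, h2, h3.2⟩)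

lemma coverChain_eq_single : ∀ (L : List A) (x : A), CoverChain x x L → L = [x]
  | [], x, h => by simp [CoverChain] at h
  | [a], x, ⟨h1, _, _⟩ => by
      simp only [List.head?_cons, Option.some.injEq] at h1; subst h1; rfl
  | a :: b :: t, x, ⟨h1, h2, h3⟩ => by
      simp only [List.head?_cons, Option.some.injEq] at h1
      subst h1
      rw [List.getLast?_cons_cons] at h2
      rw [List.Chain', List.isChain_cons_cons] at h3
      have hby := coverChain_le (b :: t) b a ⟨rfl, h2, h3.2⟩
      exact absurd (h3.1.lt.trans_le hby) (lt_irrefl a)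

lemma coverChain_decomp (L : List A) (x y : A) (h : CoverChain x y L) (hne : x ≠ y) :
    ∃ z t, L = x :: z :: t ∧ x ⋖ z ∧ CoverChain z y (z :: t) := by
  match L, h with
  | [], h => simp [CoverChain] at h
  | [a], ⟨h1, h2, _⟩ =>
      simp only [List.head?_cons, Option.some.injEq, List.getLast?_singleton] at h1 h2
      subst h1; subst h2; exact absurd rfl hne
  | a :: b :: t, ⟨h1, h2, h3⟩ =>
      simp only [List.head?_cons, Option.some.injEq] at h1
      subst h1
      rw [List.getLast?_cons_cons] at h2
      rw [List.Chain', List.isChain_cons_cons] at h3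
      exact ⟨b, t, rfl, h3.1, rfl, h2, h3.2⟩

lemma coverChain_cons {x z y : A} {t : List A} (h : x ⋖ z) (h2 : CoverChain z y (z :: t)) :
    CoverChain x y (x :: z :: t) := by
  obtain ⟨-, hl, hc⟩ := h2
  exact ⟨rfl, by rwa [List.getLast?_cons_cons], List.isChain_cons_cons.2 ⟨h, hc⟩⟩

end CC

lemma labelWord_cons {A B : Type*} (f : A → A → B) (a b : A) (t : List A) :
    labelWord f (a :: b :: t) = f a b :: labelWord f (b :: t) := rfl


variable {n : ℕ}

abbrev PartN (n : ℕ) := Finpartition (Finset.univ : Finset (Fin n))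

def maxE (B : Finset (Fin n)) : ℕ := B.sup fun a => (a : ℕ) + 1

lemma maxE_union (B C : Finset (Fin n)) : maxE (B ∪ C) = max (maxE B) (maxE C) :=
  Finset.sup_union

lemma maxE_mono {B C : Finset (Fin n)} (h : B ⊆ C) : maxE B ≤ maxE C :=
  Finset.sup_mono h

lemma exists_maxE {B : Finset (Fin n)} (h : B.Nonempty) : ∃ a ∈ B, maxE B = (a : ℕ) + 1 := by
  obtain ⟨a, ha, hmax⟩ := Finset.exists_mem_eq_sup B h (fun a => (a : ℕ) + 1)
  exact ⟨a, ha, hmax⟩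

lemma maxE_inj {x : PartN n} {B C : Finset (Fin n)} (hB : B ∈ x.parts) (hC : C ∈ x.parts)
    (h : maxE B = maxE C) : B = C := by
  obtain ⟨a, ha, hamax⟩ := exists_maxE (x.nonempty_of_mem_parts hB)
  obtain ⟨b, hb, hbmax⟩ := exists_maxE (x.nonempty_of_mem_parts hC)
  have : a = b := by
    have : (a : ℕ) = b := by omega
    exact Fin.val_injective this
  subst this
  exact x.eq_of_mem_parts hB hC ha hb

def merge (x : PartN n) (B1 B2 : Finset (Fin n)) (h1 : B1 ∈ x.parts) (h2 : B2 ∈ x.parts)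
    (hne : B1 ≠ B2) : PartN n where
  parts := insert (B1 ∪ B2) ((x.parts.erase B1).erase B2)
  supIndep := by
    rw [Finset.supIndep_iff_pairwiseDisjoint]
    rw [Finset.coe_insert]
    refine Set.PairwiseDisjoint.insert ?_ ?_
    · exact x.disjoint.subset (by
        intro P hP
        simp only [Finset.coe_erase, Set.mem_diff] at hP
        exact hP.1.1)
    · intro P hP hPne
      simp only [Finset.mem_coe, Finset.mem_erase] at hP
      obtain ⟨hP2, hP1, hPx⟩ := hP
      have d1 : Disjoint B1 P := x.disjoint h1 hPx (Ne.symm hP1)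
      have d2 : Disjoint B2 P := x.disjoint h2 hPx (Ne.symm hP2)
      simpa [id, Finset.disjoint_union_left] using ⟨d1.symm.symm, d2⟩
  sup_parts := by
    have hx : insert B1 (insert B2 ((x.parts.erase B1).erase B2)) = x.parts := by
      rw [Finset.insert_erase (Finset.mem_erase.2 ⟨Ne.symm hne, h2⟩), Finset.insert_erase h1]
    have := x.sup_parts
    rw [← hx] at this
    rw [Finset.sup_insert] at this ⊢
    rw [Finset.sup_insert] at this
    simp only [id_eq] at this ⊢
    rw [show B1 ∪ B2 = B1 ⊔ B2 from rfl, sup_assoc, this]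
  bot_notMem := by
    simp only [Finset.bot_eq_empty, Finset.mem_insert, Finset.mem_erase]
    rintro (h | ⟨-, -, h⟩)
    · obtain ⟨a, ha⟩ := x.nonempty_of_mem_parts h1
      exact absurd (h ▸ Finset.mem_union_left B2 ha) (Finset.notMem_empty a)
    · exact x.bot_notMem h

lemma mem_merge {x : PartN n} {B1 B2 : Finset (Fin n)} {h1 : B1 ∈ x.parts} {h2 : B2 ∈ x.parts}
    {hne : B1 ≠ B2} {P : Finset (Fin n)} :
    P ∈ (merge x B1 B2 h1 h2 hne).parts ↔ P = B1 ∪ B2 ∨ (P ∈ x.parts ∧ P ≠ B1 ∧ P ≠ B2) := by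
  simp only [merge, Finset.mem_insert, Finset.mem_erase]
  tauto

lemma union_not_mem {x : PartN n} {B1 B2 : Finset (Fin n)} (h1 : B1 ∈ x.parts)
    (h2 : B2 ∈ x.parts) (hne : B1 ≠ B2) : B1 ∪ B2 ∉ x.parts := by
  intro hmem
  obtain ⟨a, ha⟩ := x.nonempty_of_mem_parts h1
  have e1 : B1 = B1 ∪ B2 := x.eq_of_mem_parts h1 hmem ha (Finset.mem_union_left _ ha)
  obtain ⟨b, hb⟩ := x.nonempty_of_mem_parts h2
  have : b ∈ B1 := e1 ▸ Finset.mem_union_right _ hb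
  exact hne (x.eq_of_mem_parts h1 h2 this hb)

lemma card_merge {x : PartN n} {B1 B2 : Finset (Fin n)} (h1 : B1 ∈ x.parts)
    (h2 : B2 ∈ x.parts) (hne : B1 ≠ B2) :
    (merge x B1 B2 h1 h2 hne).parts.card + 1 = x.parts.card := by
  have hU : B1 ∪ B2 ∉ (x.parts.erase B1).erase B2 := by
    intro h
    exact union_not_mem h1 h2 hne (Finset.mem_of_mem_erase (Finset.mem_of_mem_erase h))
  have hB2 : B2 ∈ x.parts.erase B1 := Finset.mem_erase.2 ⟨Ne.symm hne, h2⟩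
  have c2 : 1 ≤ (x.parts.erase B1).card := Finset.card_pos.2 ⟨B2, hB2⟩
  show (insert (B1 ∪ B2) ((x.parts.erase B1).erase B2)).card + 1 = _
  rw [Finset.card_insert_of_notMem hU, Finset.card_erase_of_mem hB2,
    Finset.card_erase_of_mem h1]
  have c1 : 1 < x.parts.card := Finset.one_lt_card.2 ⟨B1, h1, B2, h2, hne⟩
  omega

lemma merge_comm {x : PartN n} {B1 B2 : Finset (Fin n)} (h1 : B1 ∈ x.parts)
    (h2 : B2 ∈ x.parts) (hne : B1 ≠ B2) :
    merge x B1 B2 h1 h2 hne = merge x B2 B1 h2 h1 hne.symm := by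
  apply Finpartition.ext
  show insert (B1 ∪ B2) ((x.parts.erase B1).erase B2)
      = insert (B2 ∪ B1) ((x.parts.erase B2).erase B1)
  rw [Finset.union_comm]
  congr 1
  ext P
  simp only [Finset.mem_erase]
  tauto

lemma lt_merge {x : PartN n} {B1 B2 : Finset (Fin n)} (h1 : B1 ∈ x.parts)
    (h2 : B2 ∈ x.parts) (hne : B1 ≠ B2) : x < merge x B1 B2 h1 h2 hne := by
  constructor
  · intro P hP
    by_cases e1 : P = B1
    · exact ⟨B1 ∪ B2, mem_merge.2 (Or.inl rfl), e1 ▸ Finset.subset_union_left⟩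
    by_cases e2 : P = B2
    · exact ⟨B1 ∪ B2, mem_merge.2 (Or.inl rfl), e2 ▸ Finset.subset_union_right⟩
    · exact ⟨P, mem_merge.2 (Or.inr ⟨hP, e1, e2⟩), subset_rfl⟩
  · intro hle
    obtain ⟨P, hP, hsub⟩ := hle (mem_merge.2 (Or.inl rfl))
    have hB1P : B1 ⊆ P := Finset.union_subset_iff.1 hsub |>.1
    obtain ⟨a, ha⟩ := x.nonempty_of_mem_parts h1
    have : B1 = P := x.eq_of_mem_parts h1 hP ha (hB1P ha)
    subst this
    obtain ⟨b, hb⟩ := x.nonempty_of_mem_parts h2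
    exact hne (x.eq_of_mem_parts h1 h2 (hsub (Finset.mem_union_right _ hb)) hb)

lemma merge_le {x y : PartN n} {B1 B2 Y : Finset (Fin n)} (h1 : B1 ∈ x.parts)
    (h2 : B2 ∈ x.parts) (hne : B1 ≠ B2) (hxy : x ≤ y) (hY : Y ∈ y.parts)
    (hB1Y : B1 ⊆ Y) (hB2Y : B2 ⊆ Y) : merge x B1 B2 h1 h2 hne ≤ y := by
  intro P hP
  rcases mem_merge.1 hP with rfl | ⟨hPx, -, -⟩
  · exact ⟨Y, hY, Finset.union_subset hB1Y hB2Y⟩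
  · exact hxy hPx

lemma blocks_cover {x c : PartN n} (h : x ≤ c) {K : Finset (Fin n)} (hK : K ∈ c.parts)
    {a : Fin n} (ha : a ∈ K) : ∃ B ∈ x.parts, a ∈ B ∧ B ⊆ K := by
  obtain ⟨B, hB, haB⟩ := x.exists_mem (Finset.mem_univ a)
  obtain ⟨K', hK', hBK'⟩ := h hB
  have : K = K' := c.eq_of_mem_parts hK hK' ha (hBK' haB)
  exact ⟨B, hB, haB, this ▸ hBK'⟩

lemma parts_subset_eq {x c : PartN n} (h : c.parts ⊆ x.parts) : x = c := by
  apply Finpartition.ext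
  apply Finset.Subset.antisymm _ h
  intro B hB
  obtain ⟨a, ha⟩ := x.nonempty_of_mem_parts hB
  obtain ⟨K, hK, haK⟩ := c.exists_mem (Finset.mem_univ a)
  have : B = K := x.eq_of_mem_parts hB (h hK) ha haK
  exact this ▸ hK

lemma exists_two_blocks {x c : PartN n} (hle : x ≤ c) (hne : x ≠ c) :
    ∃ K ∈ c.parts, ∃ B1 ∈ x.parts, ∃ B2 ∈ x.parts, B1 ≠ B2 ∧ B1 ⊆ K ∧ B2 ⊆ K := by
  by_contra hcon
  push_neg at hcon
  apply hne
  apply parts_subset_eq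
  intro K hK
  obtain ⟨a, ha⟩ := c.nonempty_of_mem_parts hK
  obtain ⟨B0, hB0, haB0, hB0K⟩ := blocks_cover hle hK ha
  have : K ⊆ B0 := by
    intro b hb
    obtain ⟨B, hB, hbB, hBK⟩ := blocks_cover hle hK hb
    have := hcon K hK B0 hB0 B hB
    by_cases e : B0 = B
    · exact e ▸ hbB
    · exact absurd hBK (this e hB0K)
  have : K = B0 := Finset.Subset.antisymm this hB0K
  exact this ▸ hB0

lemma covby_merge {x : PartN n} {B1 B2 : Finset (Fin n)} (h1 : B1 ∈ x.parts)
    (h2 : B2 ∈ x.parts) (hne : B1 ≠ B2) : x ⋖ merge x B1 B2 h1 h2 hne := by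
  refine ⟨lt_merge h1 h2 hne, ?_⟩
  intro c hxc hcm
  -- show impossible : x < c < merge
  obtain ⟨hle, hne'⟩ := lt_iff_le_and_ne.1 hxc
  have hcle : c ≤ merge x B1 B2 h1 h2 hne := hcm.le
  -- every x-part other than B1 B2 is a part of c
  have hother : ∀ P ∈ x.parts, P ≠ B1 → P ≠ B2 → P ∈ c.parts := by
    intro P hP e1 e2
    obtain ⟨K, hK, hPK⟩ := hle hP
    obtain ⟨Q, hQ, hKQ⟩ := hcle hK
    rcases mem_merge.1 hQ with rfl | ⟨hQx, -, -⟩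
    · -- K ⊆ B1 ∪ B2, but P ⊆ K and P disjoint from B1, B2 : contradiction
      obtain ⟨a, ha⟩ := x.nonempty_of_mem_parts hP
      rcases Finset.mem_union.1 (hKQ (hPK ha)) with h' | h'
      · exact absurd (x.eq_of_mem_parts hP h1 ha h') e1
      · exact absurd (x.eq_of_mem_parts hP h2 ha h') e2
    · -- K ⊆ Q with Q an x-part;  P ⊆ K ⊆ Q, P, Q x-parts so P = Q, so K = P
      obtain ⟨a, ha⟩ := x.nonempty_of_mem_parts hP
      have : P = Q := x.eq_of_mem_parts hP hQx ha (hKQ (hPK ha))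
      subst this
      have : K = P := Finset.Subset.antisymm hKQ hPK
      exact this ▸ hK
  -- the c-part containing B1
  obtain ⟨K1, hK1, hB1K1⟩ := hle h1
  obtain ⟨Q1, hQ1, hK1Q1⟩ := hcle hK1
  have hQ1U : Q1 = B1 ∪ B2 := by
    rcases mem_merge.1 hQ1 with h' | ⟨hQx, e1, -⟩
    · exact h'
    · obtain ⟨a, ha⟩ := x.nonempty_of_mem_parts h1
      exact absurd (x.eq_of_mem_parts h1 hQx ha (hK1Q1 (hB1K1 ha))) (Ne.symm e1)
  subst hQ1U
  -- K1 is a union of x-parts inside B1 ∪ B2, so K1 = B1 or B1 ∪ B2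
  by_cases hK1e : B2 ⊆ K1
  · -- K1 = B1 ∪ B2, and then c = merge
    have hK1eq : K1 = B1 ∪ B2 :=
      Finset.Subset.antisymm hK1Q1 (Finset.union_subset hB1K1 hK1e)
    have : (merge x B1 B2 h1 h2 hne).parts ⊆ c.parts := by
      intro P hP
      rcases mem_merge.1 hP with rfl | ⟨hPx, e1, e2⟩
      · exact hK1eq ▸ hK1
      · exact hother P hPx e1 e2
    exact absurd (parts_subset_eq this) (ne_of_lt hcm)
  · -- K1 = B1 ; similarly the part containing B2 is B2; so c = x
    have hK1B1 : K1 = B1 := by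
      apply Finset.Subset.antisymm _ hB1K1
      intro a ha
      obtain ⟨B, hB, haB, hBK1⟩ := blocks_cover hle hK1 ha
      obtain ⟨b, hb⟩ := x.nonempty_of_mem_parts hB
      rcases Finset.mem_union.1 (hK1Q1 (hBK1 hb)) with h' | h'
      · have : B = B1 := x.eq_of_mem_parts hB h1 hb h'
        exact this ▸ haB
      · have : B = B2 := x.eq_of_mem_parts hB h2 hb h'
        subst this
        exact absurd hBK1 hK1e
    obtain ⟨K2, hK2, hB2K2⟩ := hle h2
    have hK2B2 : K2 = B2 := by
      obtain ⟨Q2, hQ2, hK2Q2⟩ := hcle hK2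
      have hQ2U : Q2 = B1 ∪ B2 := by
        rcases mem_merge.1 hQ2 with h' | ⟨hQx, -, e2⟩
        · exact h'
        · obtain ⟨a, ha⟩ := x.nonempty_of_mem_parts h2
          exact absurd (x.eq_of_mem_parts h2 hQx ha (hK2Q2 (hB2K2 ha))) (Ne.symm e2)
      subst hQ2U
      apply Finset.Subset.antisymm _ hB2K2
      intro a ha
      obtain ⟨B, hB, haB, hBK2⟩ := blocks_cover hle hK2 ha
      obtain ⟨b, hb⟩ := x.nonempty_of_mem_parts hB
      rcases Finset.mem_union.1 (hK2Q2 (hBK2 hb)) with h' | h'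
      · have : B = B1 := x.eq_of_mem_parts hB h1 hb h'
        subst this
        -- then K2 = K1, contradicting B2 ⊆ K2 and ¬ B2 ⊆ K1
        have hK : K1 = K2 := c.eq_of_mem_parts hK1 hK2 (hK1B1 ▸ hb) (hBK2 hb)
        exact absurd (hK ▸ hB2K2) hK1e
      · have : B = B2 := x.eq_of_mem_parts hB h2 hb h'
        exact this ▸ haB
    -- now every x-part is a c-part, so x = c
    have : x.parts ⊆ c.parts := by
      intro P hP
      by_cases e1 : P = B1
      · exact e1 ▸ hK1B1 ▸ hK1
      by_cases e2 : P = B2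
      · exact e2 ▸ hK2B2 ▸ hK2
      · exact hother P hP e1 e2
    have : c = x := parts_subset_eq (x := c) (c := x) ?_
    · exact hne' this.symm
    · -- need x.parts ⊆ c.parts given as `this`
      exact this

lemma chi_merge {x : PartN n} {B1 B2 : Finset (Fin n)} (h1 : B1 ∈ x.parts)
    (h2 : B2 ∈ x.parts) (hne : B1 ≠ B2) :
    chi x (merge x B1 B2 h1 h2 hne) = maxE (B1 ∪ B2) := by
  have hd : (merge x B1 B2 h1 h2 hne).parts \ x.parts = {B1 ∪ B2} := by
    ext P
    simp only [Finset.mem_sdiff, Finset.mem_singleton, mem_merge]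
    constructor
    · rintro ⟨rfl | ⟨hPx, -, -⟩, hnx⟩
      · rfl
      · exact absurd hPx hnx
    · rintro rfl
      exact ⟨Or.inl rfl, union_not_mem h1 h2 hne⟩
  rw [chi, hd, Finset.sup_singleton]
  rfl

lemma exists_merge_of_covby {x z : PartN n} (hcov : x ⋖ z) :
    ∃ (B1 B2 : Finset (Fin n)) (h1 : B1 ∈ x.parts) (h2 : B2 ∈ x.parts) (hne : B1 ≠ B2),
      z = merge x B1 B2 h1 h2 hne ∧ maxE B1 < maxE B2 := by
  obtain ⟨K, hK, B1, hB1, B2, hB2, hne, hB1K, hB2K⟩ :=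
    exists_two_blocks hcov.lt.le (ne_of_lt hcov.lt)
  have key : ∀ (C1 C2 : Finset (Fin n)) (hc1 : C1 ∈ x.parts) (hc2 : C2 ∈ x.parts)
      (hcne : C1 ≠ C2), C1 ⊆ K → C2 ⊆ K → z = merge x C1 C2 hc1 hc2 hcne := by
    intro C1 C2 hc1 hc2 hcne hc1K hc2K
    have hlt := lt_merge hc1 hc2 hcne
    have hle : merge x C1 C2 hc1 hc2 hcne ≤ z :=
      merge_le hc1 hc2 hcne hcov.lt.le hK hc1K hc2K
    rcases (lt_or_eq_of_le hle) with h | h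
    · exact absurd h (hcov.2 hlt)
    · exact h.symm
  have hmne : maxE B1 ≠ maxE B2 := fun h => hne (maxE_inj hB1 hB2 h)
  rcases lt_or_gt_of_ne hmne with h | h
  · exact ⟨B1, B2, hB1, hB2, hne, key B1 B2 hB1 hB2 hne hB1K hB2K, h⟩
  · exact ⟨B2, B1, hB2, hB1, hne.symm, key B2 B1 hB2 hB1 hne.symm hB2K hB1K, h⟩

open scoped Classical in
noncomputable def cand (x y : PartN n) : Finset (Finset (Fin n)) :=
  x.parts.filter (fun B => ∃ B' ∈ x.parts, B' ≠ B ∧ (∃ Y ∈ y.parts, B ⊆ Y ∧ B' ⊆ Y) ∧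
    maxE B' < maxE B)

open scoped Classical in
noncomputable def mu (x y : PartN n) : ℕ :=
  if h : (cand x y).Nonempty then ((cand x y).image maxE).min' (h.image _) else 0

lemma mem_cand {x y : PartN n} {B : Finset (Fin n)} : B ∈ cand x y ↔ B ∈ x.parts ∧
    ∃ B' ∈ x.parts, B' ≠ B ∧ (∃ Y ∈ y.parts, B ⊆ Y ∧ B' ⊆ Y) ∧ maxE B' < maxE B := by
  classical
  simp [cand]

lemma mu_le {x y : PartN n} {B : Finset (Fin n)} (hB : B ∈ cand x y) : mu x y ≤ maxE B := by
  rw [mu, dif_pos ⟨B, hB⟩]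
  exact Finset.min'_le _ _ (Finset.mem_image_of_mem maxE hB)

lemma exists_mu {x y : PartN n} (h : (cand x y).Nonempty) :
    ∃ C ∈ cand x y, maxE C = mu x y := by
  rw [mu, dif_pos h]
  have := Finset.min'_mem ((cand x y).image maxE) (h.image _)
  rw [Finset.mem_image] at this
  obtain ⟨C, hC, hCe⟩ := this
  exact ⟨C, hC, hCe⟩

lemma cand_nonempty {x y : PartN n} (hxy : x ≤ y) (hne : x ≠ y) : (cand x y).Nonempty := by
  obtain ⟨K, hK, B1, hB1, B2, hB2, hne', h1K, h2K⟩ := exists_two_blocks hxy hne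
  have hmne : maxE B1 ≠ maxE B2 := fun h => hne' (maxE_inj hB1 hB2 h)
  rcases lt_or_gt_of_ne hmne with h | h
  · exact ⟨B2, mem_cand.2 ⟨hB2, B1, hB1, hne', ⟨K, hK, h2K, h1K⟩, h⟩⟩
  · exact ⟨B1, mem_cand.2 ⟨hB1, B2, hB2, hne'.symm, ⟨K, hK, h1K, h2K⟩, h⟩⟩

structure Canon (x y : PartN n) where
  C : Finset (Fin n)
  C' : Finset (Fin n)
  Y : Finset (Fin n)
  hC : C ∈ x.parts
  hC' : C' ∈ x.parts
  hY : Y ∈ y.parts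
  hCY : C ⊆ Y
  hC'Y : C' ⊆ Y
  hlt : maxE C' < maxE C
  hmu : maxE C = mu x y
  hmin : ∀ B ∈ x.parts, B ⊆ Y → B ≠ C' → maxE C' < maxE B

lemma Canon.ne {x y : PartN n} (cn : Canon x y) : cn.C' ≠ cn.C :=
  fun h => absurd (h ▸ cn.hlt) (lt_irrefl _)

lemma canon_exists {x y : PartN n} (hxy : x ≤ y) (hne : x ≠ y) : Nonempty (Canon x y) := by
  classical
  obtain ⟨C, hC, hCmu⟩ := exists_mu (cand_nonempty hxy hne)
  obtain ⟨hCx, B', hB', hB'ne, ⟨Y, hY, hCY, hB'Y⟩, hB'lt⟩ := mem_cand.1 hC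
  set T := x.parts.filter (fun B => B ⊆ Y) with hT
  have hB'T : B' ∈ T := Finset.mem_filter.2 ⟨hB', hB'Y⟩
  obtain ⟨C', hC'T, hC'min⟩ := Finset.exists_min_image T maxE ⟨B', hB'T⟩
  obtain ⟨hC'x, hC'Y⟩ := Finset.mem_filter.1 hC'T
  have hlt : maxE C' < maxE C := lt_of_le_of_lt (hC'min B' hB'T) hB'lt
  refine ⟨⟨C, C', Y, hCx, hC'x, hY, hCY, hC'Y, hlt, hCmu, ?_⟩⟩
  intro B hB hBY hBne
  have hle := hC'min B (Finset.mem_filter.2 ⟨hB, hBY⟩)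
  exact lt_of_le_of_ne hle (fun h => hBne (maxE_inj hB hC'x h.symm))

noncomputable def Canon.z0 {x y : PartN n} (cn : Canon x y) : PartN n :=
  merge x cn.C' cn.C cn.hC' cn.hC cn.ne

lemma Canon.covby_z0 {x y : PartN n} (cn : Canon x y) : x ⋖ cn.z0 :=
  covby_merge cn.hC' cn.hC cn.ne

lemma Canon.z0_le {x y : PartN n} (cn : Canon x y) (hxy : x ≤ y) : cn.z0 ≤ y :=
  merge_le cn.hC' cn.hC cn.ne hxy cn.hY cn.hC'Y cn.hCY

lemma Canon.chi_z0 {x y : PartN n} (cn : Canon x y) : chi x cn.z0 = mu x y := by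
  rw [Canon.z0, chi_merge, maxE_union, max_eq_right cn.hlt.le, cn.hmu]

lemma Canon.card_z0 {x y : PartN n} (cn : Canon x y) :
    cn.z0.parts.card + 1 = x.parts.card := card_merge _ _ _

lemma mu_le_chi {x y z : PartN n} (hcov : x ⋖ z) (hzy : z ≤ y) : mu x y ≤ chi x z := by
  obtain ⟨B1, B2, h1, h2, hne, rfl, hmlt⟩ := exists_merge_of_covby hcov
  obtain ⟨Y, hY, hUY⟩ := hzy (mem_merge.2 (Or.inl rfl))
  obtain ⟨hB1Y, hB2Y⟩ := Finset.union_subset_iff.1 hUY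
  rw [chi_merge, maxE_union, max_eq_right hmlt.le]
  exact mu_le (mem_cand.2 ⟨h2, B1, h1, (fun h => by subst h; exact absurd hmlt (lt_irrefl _)),
    ⟨Y, hY, hB2Y, hB1Y⟩, hmlt⟩)

lemma eq_z0_of_chi_eq {x y z : PartN n} (cn : Canon x y) (hcov : x ⋖ z) (hzy : z ≤ y)
    (heq : chi x z = mu x y) : z = cn.z0 := by
  obtain ⟨B1, B2, h1, h2, hne, rfl, hmlt⟩ := exists_merge_of_covby hcov
  obtain ⟨Yb, hYb, hUY⟩ := hzy (mem_merge.2 (Or.inl rfl))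
  obtain ⟨hB1Y, hB2Y⟩ := Finset.union_subset_iff.1 hUY
  rw [chi_merge, maxE_union, max_eq_right hmlt.le] at heq
  have hB2C : B2 = cn.C := maxE_inj h2 cn.hC (heq.trans cn.hmu.symm)
  subst hB2C
  obtain ⟨a, ha⟩ := x.nonempty_of_mem_parts cn.hC
  have hYeq : Yb = cn.Y := y.eq_of_mem_parts hYb cn.hY (hB2Y ha) (cn.hCY ha)
  subst hYeq
  have hB1C' : B1 = cn.C' := by
    by_contra hne'
    have hmin := cn.hmin B1 h1 hB1Y hne'
    have hcnd : B1 ∈ cand x y := mem_cand.2 ⟨h1, cn.C', cn.hC',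
      (fun h => hne' h.symm), ⟨cn.Y, cn.hY, hB1Y, cn.hC'Y⟩, hmin⟩
    have := mu_le hcnd
    omega
  subst hB1C'
  rfl

lemma chi_eq_or_mu_z_le {x y z : PartN n} (cn : Canon x y) (hcov : x ⋖ z) (hzy : z ≤ y) :
    chi x z = mu x y ∨ mu z y ≤ chi x z := by
  have hmuchi := mu_le_chi hcov hzy
  obtain ⟨B1, B2, h1, h2, hne, rfl, hmlt⟩ := exists_merge_of_covby hcov
  obtain ⟨Yb, hYb, hUY⟩ := hzy (mem_merge.2 (Or.inl rfl))
  obtain ⟨hB1Y, hB2Y⟩ := Finset.union_subset_iff.1 hUY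
  have hchi : chi x (merge x B1 B2 h1 h2 hne) = maxE B2 := by
    rw [chi_merge, maxE_union, max_eq_right hmlt.le]
  rw [hchi] at hmuchi ⊢
  by_cases hB2C : B2 = cn.C
  · left; rw [hB2C, cn.hmu]
  by_cases hB2C' : B2 = cn.C'
  · -- impossible : maxE B2 = maxE C' < maxE C = mu x y ≤ maxE B2
    exfalso
    have := cn.hlt
    rw [← hB2C', cn.hmu] at this
    omega
  right
  have hUne : ∀ P ∈ x.parts, P ≠ B1 ∪ B2 :=
    fun P hP h => union_not_mem h1 h2 hne (h ▸ hP)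
  by_cases hB1C : B1 = cn.C
  · -- witness C' for D = B1 ∪ B2
    subst hB1C
    obtain ⟨a, ha⟩ := x.nonempty_of_mem_parts cn.hC
    have hYeq : Yb = cn.Y := y.eq_of_mem_parts hYb cn.hY (hB1Y ha) (cn.hCY ha)
    subst hYeq
    have hC'z : cn.C' ∈ (merge x cn.C B2 h1 h2 hne).parts :=
      mem_merge.2 (Or.inr ⟨cn.hC', cn.ne, fun h => hB2C' h.symm⟩)
    have hUz : cn.C ∪ B2 ∈ (merge x cn.C B2 h1 h2 hne).parts := mem_merge.2 (Or.inl rfl)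
    have hcnd : cn.C ∪ B2 ∈ cand (merge x cn.C B2 h1 h2 hne) y :=
      mem_cand.2 ⟨hUz, cn.C', hC'z, hUne cn.C' cn.hC', ⟨cn.Y, hYb, hUY, cn.hC'Y⟩,
        by rw [maxE_union, max_eq_right hmlt.le]
           exact lt_of_lt_of_le (cn.hmu ▸ cn.hlt) hmuchi⟩
    have := mu_le hcnd
    rw [maxE_union, max_eq_right hmlt.le] at this
    exact this
  by_cases hB1C' : B1 = cn.C'
  · -- witness C for D = B1 ∪ B2
    subst hB1C'
    obtain ⟨a, ha⟩ := x.nonempty_of_mem_parts cn.hC'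
    have hYeq : Yb = cn.Y := y.eq_of_mem_parts hYb cn.hY (hB1Y ha) (cn.hC'Y ha)
    subst hYeq
    have hCz : cn.C ∈ (merge x cn.C' B2 h1 h2 hne).parts :=
      mem_merge.2 (Or.inr ⟨cn.hC, cn.ne.symm, fun h => hB2C h.symm⟩)
    have hUz : cn.C' ∪ B2 ∈ (merge x cn.C' B2 h1 h2 hne).parts := mem_merge.2 (Or.inl rfl)
    have hlt2 : maxE cn.C < maxE B2 := by
      have : maxE cn.C ≠ maxE B2 := fun h => hB2C (maxE_inj h2 cn.hC h.symm)
      rw [cn.hmu] at this ⊢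
      omega
    have hcnd : cn.C' ∪ B2 ∈ cand (merge x cn.C' B2 h1 h2 hne) y :=
      mem_cand.2 ⟨hUz, cn.C, hCz, hUne cn.C cn.hC, ⟨cn.Y, hYb, hUY, cn.hCY⟩,
        by rw [maxE_union, max_eq_right hmlt.le]; exact hlt2⟩
    have := mu_le hcnd
    rw [maxE_union, max_eq_right hmlt.le] at this
    exact this
  · -- C and C' both survive in z
    have hCz : cn.C ∈ (merge x B1 B2 h1 h2 hne).parts :=
      mem_merge.2 (Or.inr ⟨cn.hC, fun h => hB1C h.symm, fun h => hB2C h.symm⟩)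
    have hC'z : cn.C' ∈ (merge x B1 B2 h1 h2 hne).parts :=
      mem_merge.2 (Or.inr ⟨cn.hC', fun h => hB1C' h.symm, fun h => hB2C' h.symm⟩)
    have hcnd : cn.C ∈ cand (merge x B1 B2 h1 h2 hne) y :=
      mem_cand.2 ⟨hCz, cn.C', hC'z, cn.ne, ⟨cn.Y, cn.hY, cn.hCY, cn.hC'Y⟩, cn.hlt⟩
    have := mu_le hcnd
    rw [cn.hmu] at this
    omega

lemma mu_lt_mu {x y : PartN n} (cn : Canon x y) (hxy : x ≤ y) (hz0y : cn.z0 ≠ y) :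
    mu x y < mu cn.z0 y := by
  have hz0le : cn.z0 ≤ y := cn.z0_le hxy
  obtain ⟨D, hD, hDmu⟩ := exists_mu (cand_nonempty hz0le hz0y)
  rw [← hDmu]
  obtain ⟨hDz, D', hD', hD'ne, ⟨Y', hY', hDY', hD'Y'⟩, hD'lt⟩ := mem_cand.1 hD
  have hz0parts : cn.z0.parts = (merge x cn.C' cn.C cn.hC' cn.hC cn.ne).parts := rfl
  rcases mem_merge.1 (hz0parts ▸ hDz) with hDU | ⟨hDx, hDC', hDC⟩
  · exfalso
    have hmaxD : maxE D = mu x y := by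
      rw [hDU, maxE_union, max_eq_right cn.hlt.le, cn.hmu]
    rcases mem_merge.1 (hz0parts ▸ hD') with h' | ⟨hD'x, hD'C', hD'C⟩
    · exact hD'ne (h'.trans hDU.symm)
    obtain ⟨a, ha⟩ := x.nonempty_of_mem_parts cn.hC
    have haD : a ∈ D := hDU ▸ Finset.mem_union_right _ ha
    have hYY : Y' = cn.Y := y.eq_of_mem_parts hY' cn.hY (hDY' haD) (cn.hCY ha)
    subst hYY
    have h3 := cn.hmin D' hD'x hD'Y' hD'C'
    have hcnd : D' ∈ cand x y := mem_cand.2 ⟨hD'x, cn.C', cn.hC',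
      fun h => hD'C' h.symm, ⟨cn.Y, hY', hD'Y', cn.hC'Y⟩, h3⟩
    have := mu_le hcnd
    omega
  · have hDcand : D ∈ cand x y := by
      rcases mem_merge.1 (hz0parts ▸ hD') with hU | ⟨hD'x, -, -⟩
      · -- D' = C' ∪ C ; use C as witness
        have hCD' : cn.C ⊆ D' := hU ▸ Finset.subset_union_right
        have hmaxD' : maxE D' = maxE cn.C := by
          rw [hU, maxE_union, max_eq_right cn.hlt.le]
        exact mem_cand.2 ⟨hDx, cn.C, cn.hC, fun h => hDC h.symm,
          ⟨Y', hY', hDY', hCD'.trans hD'Y'⟩, hmaxD' ▸ hD'lt⟩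
      · exact mem_cand.2 ⟨hDx, D', hD'x, hD'ne, ⟨Y', hY', hDY', hD'Y'⟩, hD'lt⟩
    have hne' : maxE D ≠ mu x y := fun h => hDC (maxE_inj hDx cn.hC (h.trans cn.hmu.symm))
    exact lt_of_le_of_ne (mu_le hDcand) (Ne.symm hne')

lemma base_case (x : PartN n) :
    ∃ L : List (PartN n),
      CoverChain x x L ∧ (labelWord chi L).Chain' (fun a b => a < b) ∧
      (∀ M, CoverChain x x M → (labelWord chi M).Chain' (fun a b => a < b) → M = L) ∧
      (∀ M, CoverChain x x M → M ≠ L →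
        List.Lex (fun a b => a < b) (labelWord chi L) (labelWord chi M)) ∧
      (x ≠ x → (labelWord chi L).head? = some (mu x x)) := by
  refine ⟨[x], coverChain_single x, List.isChain_nil, ?_, ?_, fun h => absurd rfl h⟩
  · intro M hM _
    exact coverChain_eq_single M x hM
  · intro M hM hne
    exact absurd (coverChain_eq_single M x hM) hne

theorem main : ∀ (k : ℕ) (x y : PartN n), x.parts.card ≤ k → x ≤ y →
    ∃ L : List (PartN n),
      CoverChain x y L ∧ (labelWord chi L).Chain' (fun a b => a < b) ∧
      (∀ M, CoverChain x y M → (labelWord chi M).Chain' (fun a b => a < b) → M = L) ∧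
      (∀ M, CoverChain x y M → M ≠ L →
        List.Lex (fun a b => a < b) (labelWord chi L) (labelWord chi M)) ∧
      (x ≠ y → (labelWord chi L).head? = some (mu x y)) := by
  intro k
  induction k with
  | zero =>
    intro x y hcard hxy
    have hxyeq : x = y := by
      have hle := Finpartition.card_mono hxy
      have hx0 : x.parts = ∅ := Finset.card_eq_zero.1 (by omega)
      have hy0 : y.parts = ∅ := Finset.card_eq_zero.1 (by omega)
      exact Finpartition.ext (hx0.trans hy0.symm)
    subst hxyeq
    exact base_case x
  | succ k ih =>
    intro x y hcard hxy
    by_cases hxyeq : x = y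
    · subst hxyeq; exact base_case x
    obtain ⟨cn⟩ := canon_exists hxy hxyeq
    have hz0card : cn.z0.parts.card ≤ k := by have := cn.card_z0; omega
    obtain ⟨L', hcc', hinc', huniq', hlex', hhead'⟩ := ih cn.z0 y hz0card (cn.z0_le hxy)
    obtain ⟨t, rfl⟩ : ∃ t, L' = cn.z0 :: t := by
      obtain ⟨hh', -, -⟩ := hcc'
      cases L' with
      | nil => simp at hh'
      | cons a t =>
        simp only [List.head?_cons, Option.some.injEq] at hh'
        exact ⟨t, by rw [hh']⟩
    refine ⟨x :: cn.z0 :: t, coverChain_cons cn.covby_z0 hcc', ?_, ?_, ?_, ?_⟩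
    · -- strictly increasing labels
      rw [labelWord_cons]
      refine List.isChain_cons.2 ⟨?_, hinc'⟩
      intro b hb
      have hz0y : cn.z0 ≠ y := by
        intro h
        have h2 := coverChain_eq_single _ _ (h ▸ hcc')
        simp only [List.cons.injEq] at h2
        obtain ⟨-, ht⟩ := h2
        subst ht
        simp [labelWord] at hb
      have heq := hhead' hz0y
      rw [Option.mem_def] at hb
      rw [hb] at heq
      have hbmu : b = mu cn.z0 y := Option.some_injective _ heq
      rw [hbmu, cn.chi_z0]
      exact mu_lt_mu cn hxy hz0y
    · -- uniqueness
      intro M hM hMinc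
      obtain ⟨z, s, rfl, hxz, hMcc'⟩ := coverChain_decomp M x y hM hxyeq
      have hzy : z ≤ y := coverChain_le _ _ _ hMcc'
      rw [labelWord_cons] at hMinc
      have hMinc' := (List.isChain_cons.1 hMinc).2
      have hzz0 : z = cn.z0 := by
        by_cases hzyeq : z = y
        · subst hzyeq
          rcases lt_or_eq_of_le (cn.z0_le hxy) with h | h
          · exact absurd h (hxz.2 cn.covby_z0.lt)
          · exact h.symm
        · have hzcard : z.parts.card ≤ k := by
            obtain ⟨B1, B2, h1, h2, hneq, rfl, -⟩ := exists_merge_of_covby hxz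
            have := card_merge h1 h2 hneq
            omega
          obtain ⟨L'', hcc'', hinc'', huniq'', hlex'', hhead''⟩ := ih z y hzcard hzy
          have hMeq := huniq'' _ hMcc' hMinc'
          have hheadM : (labelWord chi (z :: s)).head? = some (mu z y) := by
            rw [hMeq]; exact hhead'' hzyeq
          have hlt : chi x z < mu z y :=
            (List.isChain_cons.1 hMinc).1 _ hheadM
          rcases chi_eq_or_mu_z_le cn hxz hzy with h | h
          · exact eq_z0_of_chi_eq cn hxz hzy h
          · omega
      subst hzz0
      have := huniq' _ hMcc' hMinc'
      rw [this]
    · -- lexicographic minimality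
      intro M hM hMne
      obtain ⟨z, s, rfl, hxz, hMcc'⟩ := coverChain_decomp M x y hM hxyeq
      have hzy : z ≤ y := coverChain_le _ _ _ hMcc'
      have hge : mu x y ≤ chi x z := mu_le_chi hxz hzy
      rcases lt_or_eq_of_le hge with h | h
      · rw [labelWord_cons, labelWord_cons]
        apply List.Lex.rel
        rw [cn.chi_z0]
        exact h
      · have hzz0 : z = cn.z0 := eq_z0_of_chi_eq cn hxz hzy h.symm
        subst hzz0
        have hMne' : (cn.z0 :: s) ≠ (cn.z0 :: t) := fun hh => hMne (by rw [hh])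
        have hlex := hlex' _ hMcc' hMne'
        rw [labelWord_cons, labelWord_cons]
        exact List.Lex.cons hlex
    · -- head of the label word
      intro _
      rw [labelWord_cons, cn.chi_z0]
      rfl

/-- the Wachs labeling `χ` is an EL-labeling of the partition
lattice `Π_n`: every interval has a unique maximal chain with strictly increasing
label word, and that chain lexicographically precedes all other maximal chains
of the interval. -/
theorem statement3 (n : ℕ) (x y : Finpartition (Finset.univ : Finset (Fin n)))
    (h : x ≤ y) :
    ∃ L : List (Finpartition (Finset.univ : Finset (Fin n))),
      CoverChain x y L ∧ (labelWord chi L).Chain' (fun a b => a < b) ∧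
      (∀ M, CoverChain x y M -> (labelWord chi M).Chain' (fun a b => a < b) -> M = L) ∧
      (∀ M, CoverChain x y M -> M ≠ L ->
        List.Lex (fun a b => a < b) (labelWord chi L) (labelWord chi M)) := by
  obtain ⟨L, h1, h2, h3, h4, -⟩ := main x.parts.card x y le_rfl h
  exact ⟨L, h1, h2, h3, h4⟩
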